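/- Let C be a symmetric monoidal category with braiding β, and let L, L' be objects of C such that there is an isomorphism L' ⊗ L ≅ 1. If the braiding β_{L,L} : L ⊗ L → L ⊗ L equals the identity, then the braiding β_{L',L'} : L' ⊗ L' → L' ⊗ L' also equals the identity. -/

import Mathlib

open CategoryTheory CategoryTheory.MonoidalCategory

open BraidedCategory

set_option maxHeartbeats 1000000

/-- In a symmetric monoidal category, if `L' ⊗ L ≅ 𝟙_C` and the braiding `β_{L,L}` is the
identity, then the braiding `β_{L',L'}` is also the identity. -/
theorem stmt_10 (C : Type*) [Category C] [MonoidalCategory C] [SymmetricCategory C]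
    (L L' : C) (c : L' ⊗ L ≅ 𝟙_ C)
    (h : (β_ L L).hom = 𝟙 (L ⊗ L)) : (β_ L' L').hom = 𝟙 (L' ⊗ L') := by
  have e : L ⊗ L' ≅ 𝟙_ C := (β_ L L') ≪≫ c
  have cancel : ∀ {X Y : C} (u v : X ⟶ Y), u ▷ L = v ▷ L → u = v := by
    intro X Y u v hu
    have h2 : u ▷ (L ⊗ L') = v ▷ (L ⊗ L') := by
      rw [whiskerRight_tensor, whiskerRight_tensor, hu]
    have h3 := h2 =≫ (Y ◁ e.hom)
    rw [← whisker_exchange, ← whisker_exchange] at h3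
    have h4 := (cancel_epi (X ◁ e.hom)).1 h3
    rw [MonoidalCategory.whiskerRight_id, MonoidalCategory.whiskerRight_id] at h4
    simpa using h4
  have nat1 : (β_ (L' ⊗ L) L).hom = (c.hom ▷ L) ≫ (β_ (𝟙_ C) L).hom ≫ (L ◁ c.inv) := by
    have hn := braiding_naturality_left c.hom L
    calc (β_ (L' ⊗ L) L).hom
        = ((β_ (L' ⊗ L) L).hom ≫ L ◁ c.hom) ≫ L ◁ c.inv := by
          simp only [Category.assoc, whiskerLeft_hom_inv, Category.comp_id]
      _ = (c.hom ▷ L ≫ (β_ (𝟙_ C) L).hom) ≫ L ◁ c.inv := by rw [hn]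
      _ = _ := by simp only [Category.assoc]
  have E1 : (β_ L' L).hom ▷ L
      = (c.hom ▷ L) ≫ (β_ (𝟙_ C) L).hom ≫ (L ◁ c.inv) ≫ (α_ L L' L).inv := by
    have hb := braiding_tensor_left_hom L' L L
    rw [h, nat1] at hb
    simp only [MonoidalCategory.whiskerLeft_id, Category.id_comp, Iso.hom_inv_id_assoc,
      Category.assoc] at hb
    rw [← cancel_mono ((α_ L L' L).hom)]
    simp only [Category.assoc, Iso.inv_hom_id, Category.comp_id]
    exact hb.symm
  have E1inv : (β_ L' L).inv ▷ L
      = (α_ L L' L).hom ≫ (L ◁ c.hom) ≫ (β_ (𝟙_ C) L).inv ≫ (c.inv ▷ L) := by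
    rw [← cancel_epi ((β_ L' L).hom ▷ L)]
    conv_lhs => rw [← comp_whiskerRight, Iso.hom_inv_id, id_whiskerRight]
    rw [E1]
    simp
  have nat0 : (β_ L' (L' ⊗ L)).hom = (L' ◁ c.hom) ≫ (β_ L' (𝟙_ C)).hom ≫ (c.inv ▷ L') := by
    have hn := braiding_naturality_right L' c.hom
    calc (β_ L' (L' ⊗ L)).hom
        = ((β_ L' (L' ⊗ L)).hom ≫ c.hom ▷ L') ≫ c.inv ▷ L' := by
          simp only [Category.assoc, hom_inv_whiskerRight, Category.comp_id]
      _ = (L' ◁ c.hom ≫ (β_ L' (𝟙_ C)).hom) ≫ c.inv ▷ L' := by rw [hn]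
      _ = _ := by simp only [Category.assoc]
  have E0 : (β_ L' L').hom ▷ L
      = (α_ L' L' L).hom ≫ (L' ◁ c.hom) ≫ (β_ L' (𝟙_ C)).hom ≫ (c.inv ▷ L')
        ≫ (α_ L' L L').hom ≫ (L' ◁ (β_ L' L).inv) ≫ (α_ L' L' L).inv := by
    have hb := braiding_tensor_right_hom L' L' L
    rw [nat0] at hb
    rw [← cancel_mono ((α_ L' L' L).hom), ← cancel_mono ((L' : C) ◁ (β_ L' L).hom),
      ← cancel_mono ((α_ L' L L').inv)]
    simp only [Category.assoc, Iso.inv_hom_id_assoc, whiskerLeft_inv_hom_assoc,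
      Iso.inv_hom_id, Category.comp_id, whiskerLeft_inv_hom]
    rw [reassoc_of% hb]
    simp only [Category.assoc, Iso.hom_inv_id_assoc, Iso.hom_inv_id, Category.comp_id,
      Iso.inv_hom_id_assoc, Iso.inv_hom_id]
  refine cancel _ _ (cancel _ _ ?_)
  simp only [MonoidalCategory.id_whiskerRight]
  rw [E0]
  simp only [comp_whiskerRight, whisker_assoc, Category.assoc]
  rw [E1inv]
  simp only [MonoidalCategory.whiskerLeft_comp, Category.assoc,
    braiding_tensorUnit_left, braiding_tensorUnit_right, braiding_inv_tensorUnit_left,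
    braiding_inv_tensorUnit_right, comp_whiskerRight]
  trans (𝟙 (((L' ⊗ L') ⊗ L) ⊗ L) ⊗≫ L' ◁ (c.hom ▷ L) ⊗≫
      (c.inv ▷ (L' ⊗ L) ≫ (L' ⊗ L) ◁ c.hom) ⊗≫ L' ◁ (c.inv ▷ L) ⊗≫ 𝟙 (((L' ⊗ L') ⊗ L) ⊗ L))
  · monoidal
  · rw [← whisker_exchange]
    have mid : (𝟙_ C) ◁ c.hom ≫ c.inv ▷ (𝟙_ C) = (λ_ (L' ⊗ L)).hom ≫ (ρ_ (L' ⊗ L)).inv := by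
      rw [MonoidalCategory.id_whiskerLeft, MonoidalCategory.whiskerRight_id]
      simp [← unitors_equal]
    rw [mid]
    trans (𝟙 (((L' ⊗ L') ⊗ L) ⊗ L) ⊗≫
        (L' ◁ (c.hom ▷ L) ≫ L' ◁ (c.inv ▷ L)) ⊗≫ 𝟙 (((L' ⊗ L') ⊗ L) ⊗ L))
    · monoidal
    · rw [← MonoidalCategory.whiskerLeft_comp, ← comp_whiskerRight, Iso.hom_inv_id,
        MonoidalCategory.id_whiskerRight, MonoidalCategory.whiskerLeft_id]
      monoidal
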